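/- For every Motzkin path mz of width n, the weight ω(mz) depends only on its building sequence a^(mz) = (f_0, p_1, f_1, ..., p_h, f_h); namely, ω(mz) = ∏_{i=0}^{h} (2i+1)^{f_i} · ∏_{i=1}^{h} i^{2 p_i} = perm(a^(mz)). -/
import Mathlib


/-- Moves of a Motzkin path: Up-right, Horizontal-right, Down-right. -/
inductive Move : Type
  | U : Move
  | H : Move
  | D : Move
deriving DecidableEq

open Move

/-- The vertical step of a move. -/
def Move.step : Move → ℤ
  | U => 1
  | H => 0
  | D => -1

/-- The height of a path after its first `i` moves. -/
def heightAt (mz : List Move) (i : ℕ) : ℤ :=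
  ((mz.take i).map Move.step).sum

/-- A word over {U,H,D} is a Motzkin path if it never goes below the x-axis
and ends on the x-axis. -/
def IsMotzkin (mz : List Move) : Prop :=
  (∀ i, 0 ≤ heightAt mz i) ∧ heightAt mz mz.length = 0

/-- The area between the x-axis and the path (sum of heights at integer points). -/
def area (mz : List Move) : ℤ :=
  ∑ i ∈ Finset.range (mz.length + 1), heightAt mz i

/-- `MZ n A` is the set of Motzkin paths of width `n` and area `A`. -/
def MZ (n A : ℕ) : Set (List Move) :=
  {mz | mz.length = n ∧ IsMotzkin mz ∧ area mz = A}

/-- The weight `ω_i` of the `i`-th move (0-indexed): it is `h_i` for U and D moves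
(height after the move for U, before the move for D) and `2h_i + 1` for H moves. -/
def moveWeight (mz : List Move) (i : ℕ) : ℤ :=
  match mz[i]? with
  | some U => heightAt mz (i + 1)
  | some D => heightAt mz i
  | some H => 2 * heightAt mz i + 1
  | none => 1

/-- The weight `ω(mz)` of a Motzkin path. -/
def weight (mz : List Move) : ℤ :=
  ∏ i ∈ Finset.range mz.length, moveWeight mz i

/-- The total displacement `D(π) = Σ_i |i - π(i)|` of a permutation. -/
def totalDisp {n : ℕ} (π : Equiv.Perm (Fin n)) : ℤ :=
  ∑ i : Fin n, |((π i : ℕ) : ℤ) - ((i : ℕ) : ℤ)|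

/-- The word over {U,H,D} associated to a permutation. -/
def toPath {n : ℕ} (π : Equiv.Perm (Fin n)) : List Move :=
  (List.finRange n).map fun i : Fin n =>
    if (i : ℕ) < (π i : ℕ) ∧ (i : ℕ) < (π.symm i : ℕ) then U
    else if (π i : ℕ) < (i : ℕ) ∧ (π.symm i : ℕ) < (i : ℕ) then D
    else H

/-- The last fall length: the length of the maximal suffix consisting of D moves. -/
def lastFall (mz : List Move) : ℕ :=
  (mz.reverse.takeWhile (fun m => decide (m = D))).length

/-- The maximum height of a path. -/
def maxHeight (mz : List Move) : ℕ :=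
  (Finset.range (mz.length + 1)).sup fun i => (heightAt mz i).toNat

/-- `flatsAt mz k` is the number of H moves of `mz` made at height `k`. -/
def flatsAt (mz : List Move) (k : ℕ) : ℕ :=
  ((Finset.range mz.length).filter fun j => mz[j]? = some H ∧ heightAt mz j = (k : ℤ)).card

/-- `peaksAt mz k` is the number of U moves of `mz` ending at height `k`. -/
def peaksAt (mz : List Move) (k : ℕ) : ℕ :=
  ((Finset.range mz.length).filter fun j => mz[j]? = some U ∧ heightAt mz (j + 1) = (k : ℤ)).card

/-- `downsAt mz k` is the number of D moves of `mz` starting at height `k`. -/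
def downsAt (mz : List Move) (k : ℕ) : ℕ :=
  ((Finset.range mz.length).filter fun j => mz[j]? = some D ∧ heightAt mz j = (k : ℤ)).card

/-- A candidate building sequence `(f_0, p_1, f_1, …, p_h, f_h)`, recorded as its
height `h` together with the flat counts `f` and peak counts `p`. -/
structure BSeq where
  h : ℕ
  f : ℕ → ℕ
  p : ℕ → ℕ

/-- `Sset n A` is the set of building sequences for width `n` and area `A`:
all `p`-entries `p_1, …, p_h` are positive, entries beyond the height are zero, and the
width and area conditions hold. -/
def Sset (n A : ℕ) : Set BSeq :=
  {a | (∀ i, 1 ≤ i → i ≤ a.h → 0 < a.p i) ∧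
       a.p 0 = 0 ∧
       (∀ i, a.h < i → a.p i = 0) ∧
       (∀ i, a.h < i → a.f i = 0) ∧
       (∑ i ∈ Finset.range (a.h + 1), a.f i) + 2 * (∑ i ∈ Finset.Icc 1 a.h, a.p i) = n ∧
       (∑ i ∈ Finset.range (a.h + 1), i * a.f i) +
         (∑ i ∈ Finset.Icc 1 a.h, (2 * i - 1) * a.p i) = A}

/-- `mz` has building sequence `a`. -/
def hasBuildSeq (mz : List Move) (a : BSeq) : Prop :=
  maxHeight mz = a.h ∧ (∀ i, flatsAt mz i = a.f i) ∧ (∀ i, peaksAt mz i = a.p i)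

/-- `perm(a) = ∏_{i=0}^h (2i+1)^{f_i} · ∏_{i=1}^h i^{2p_i}`. -/
def permWeight (a : BSeq) : ℕ :=
  (∏ i ∈ Finset.range (a.h + 1), (2 * i + 1) ^ a.f i) *
    ∏ i ∈ Finset.Icc 1 a.h, i ^ (2 * a.p i)

/-- `m(a)`, the number of Motzkin paths with building sequence `a`. -/
def mcount (a : BSeq) : ℕ :=
  Nat.choose (a.f a.h + a.p a.h - 1) (a.p a.h - 1) *
    (∏ i ∈ Finset.Icc 1 (a.h - 1),
      Nat.choose (a.p (i + 1) + a.f i) (a.f i) *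
        Nat.choose (a.p (i + 1) + a.f i + a.p i - 1) (a.p i - 1)) *
    Nat.choose (a.p 1 + a.f 0) (a.f 0)

/-- `M(n,A,l)`: the number of Motzkin paths of width `n`, area `A` and last fall length `l`
(for negative arguments there are no such paths, so the value is `0`; the value at
`(0,0,0)` is `1`, counting the empty path). -/
noncomputable def Mcount (n A l : ℤ) : ℕ :=
  Nat.card {mz : List Move // (mz.length : ℤ) = n ∧ IsMotzkin mz ∧ area mz = A ∧
    (lastFall mz : ℤ) = l}

/-- `D(n,d,l)`: the sum of the weights of all Motzkin paths of width `n`, area `d` and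
last fall length `l`. -/
noncomputable def Dw (n d l : ℤ) : ℤ :=
  ∑ᶠ mz ∈ {mz : List Move | (mz.length : ℤ) = n ∧ IsMotzkin mz ∧ area mz = d ∧
    (lastFall mz : ℤ) = l}, weight mz

/-- `M(n,A,h,p)`: the number of Motzkin paths of width `n`, area `A`, maximum height `h`,
with exactly `p` U-moves ending at height `h` and no H-moves at height `h`. -/
noncomputable def Mtop (n A h p : ℤ) : ℕ :=
  Nat.card {mz : List Move // (mz.length : ℤ) = n ∧ IsMotzkin mz ∧ area mz = A ∧
    (maxHeight mz : ℤ) = h ∧ (peaksAt mz h.toNat : ℤ) = p ∧ flatsAt mz h.toNat = 0}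

/-- `D(n,d,h,p)`: the sum of weights of Motzkin paths of width `n`, area `d`,
maximum height `h`, with exactly `p` U-moves ending at height `h` and no H-moves at height `h`. -/
noncomputable def Dtop (n d h p : ℤ) : ℤ :=
  ∑ᶠ mz ∈ {mz : List Move | (mz.length : ℤ) = n ∧ IsMotzkin mz ∧ area mz = d ∧
    (maxHeight mz : ℤ) = h ∧ (peaksAt mz h.toNat : ℤ) = p ∧ flatsAt mz h.toNat = 0}, weight mz

/-- The area under the first `i` moves of a path (trapezoid rule; may be a half-integer). -/
def prefixArea (mz : List Move) (i : ℕ) : ℚ :=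
  ∑ j ∈ Finset.range i, ((heightAt mz j : ℚ) + (heightAt mz (j + 1) : ℚ)) / 2

section Aux

lemma heightAt_zero (mz : List Move) : heightAt mz 0 = 0 := by simp [heightAt]

lemma heightAt_succ_eq (mz : List Move) (j : ℕ) (m : Move)
    (hm : mz[j]? = some m) : heightAt mz (j + 1) = heightAt mz j + m.step := by
  unfold heightAt
  rw [List.take_succ, List.map_append, List.sum_append, hm]
  simp

lemma heightAt_le_maxHeight (mz : List Move) (i : ℕ) (hi : i ≤ mz.length) :
    heightAt mz i ≤ (maxHeight mz : ℤ) := by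
  have h1 : (heightAt mz i).toNat ≤ maxHeight mz :=
    Finset.le_sup (f := fun i => (heightAt mz i).toNat)
      (Finset.mem_range.2 (Nat.lt_succ_of_le hi))
  omega

lemma exists_move (mz : List Move) (j : ℕ) (hj : j < mz.length) :
    ∃ m, mz[j]? = some m := ⟨mz[j], List.getElem?_eq_getElem hj⟩

lemma downsAt_eq_peaksAt (mz : List Move) (hmz : IsMotzkin mz) (k : ℕ) (hk : 1 ≤ k) :
    downsAt mz k = peaksAt mz k := by
  classical
  have key : ∑ j ∈ Finset.range mz.length,
      ((if (k : ℤ) ≤ heightAt mz (j + 1) then (1 : ℤ) else 0)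
        - (if (k : ℤ) ≤ heightAt mz j then (1 : ℤ) else 0)) = 0 := by
    rw [Finset.sum_range_sub (fun i => if (k : ℤ) ≤ heightAt mz i then (1 : ℤ) else 0)]
    rw [hmz.2, heightAt_zero]
    simp
  have hpt : ∀ j ∈ Finset.range mz.length,
      ((if (k : ℤ) ≤ heightAt mz (j + 1) then (1 : ℤ) else 0)
        - (if (k : ℤ) ≤ heightAt mz j then (1 : ℤ) else 0)) =
      ((if mz[j]? = some U ∧ heightAt mz (j + 1) = (k : ℤ) then (1 : ℤ) else 0)
        - (if mz[j]? = some D ∧ heightAt mz j = (k : ℤ) then (1 : ℤ) else 0)) := by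
    intro j hj
    obtain ⟨m, hm⟩ := exists_move mz j (Finset.mem_range.1 hj)
    have hs := heightAt_succ_eq mz j m hm
    cases m <;> simp only [hm, Move.step] at hs ⊢ <;>
      split_ifs with h1 h2 <;> simp_all <;> omega
  rw [Finset.sum_congr rfl hpt, Finset.sum_sub_distrib,
    Finset.sum_boole, Finset.sum_boole] at key
  have : ((Finset.range mz.length).filter
      fun j => mz[j]? = some U ∧ heightAt mz (j + 1) = (k : ℤ)).card =
      ((Finset.range mz.length).filter
      fun j => mz[j]? = some D ∧ heightAt mz j = (k : ℤ)).card := by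
    exact_mod_cast sub_eq_zero.mp key
  unfold downsAt peaksAt
  omega

lemma prod_eq_pow_card {s t : Finset ℕ} (g : ℕ → ℤ) (F : ℕ → ℤ)
    (hg : ∀ j ∈ s, 0 ≤ g j) (hmap : ∀ j ∈ s, (g j).toNat ∈ t) :
    ∏ j ∈ s, F (g j).toNat = ∏ k ∈ t, F k ^ (s.filter fun j => g j = (k : ℤ)).card := by
  classical
  rw [← Finset.prod_fiberwise_of_maps_to hmap (fun j => F (g j).toNat)]
  refine Finset.prod_congr rfl fun k _ => ?_
  have hfe : (s.filter fun j => (g j).toNat = k) = s.filter fun j => g j = (k : ℤ) :=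
    Finset.filter_congr fun j hj => by have := hg j hj; constructor <;> intro <;> omega
  rw [← hfe]
  calc ∏ j ∈ s.filter fun j => (g j).toNat = k, F (g j).toNat
      = ∏ _j ∈ s.filter fun j => (g j).toNat = k, F k :=
        Finset.prod_congr rfl fun j hj => by rw [(Finset.mem_filter.1 hj).2]
    _ = F k ^ _ := Finset.prod_const _

lemma weight_eq_main (mz : List Move) (hmz : IsMotzkin mz) :
    weight mz = (permWeight (BSeq.mk (maxHeight mz) (flatsAt mz) (peaksAt mz)) : ℤ) := by
  classical
  set n := mz.length with hn
  set h := maxHeight mz with hh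
  have hnn := hmz.1
  -- split the weight product by move type
  have split2 := Finset.prod_filter_mul_prod_filter_not
      ((Finset.range n).filter fun j => ¬ mz[j]? = some U)
      (fun j => mz[j]? = some D) (moveWeight mz)
  have split1 := Finset.prod_filter_mul_prod_filter_not (Finset.range n)
      (fun j => mz[j]? = some U) (moveWeight mz)
  rw [Finset.filter_filter, Finset.filter_filter] at split2
  have hHfilt : ((Finset.range n).filter fun j => ¬ mz[j]? = some U ∧ ¬ mz[j]? = some D)
      = (Finset.range n).filter fun j => mz[j]? = some H := by
    refine Finset.filter_congr fun j hj => ?_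
    obtain ⟨m, hm⟩ := exists_move mz j (Finset.mem_range.1 hj)
    cases m <;> simp [hm]
  have hDfilt : ((Finset.range n).filter fun j => ¬ mz[j]? = some U ∧ mz[j]? = some D)
      = (Finset.range n).filter fun j => mz[j]? = some D := by
    refine Finset.filter_congr fun j _ => ?_
    constructor
    · exact fun h => h.2
    · intro h; exact ⟨by simp [h], h⟩
  rw [hHfilt, hDfilt] at split2
  have hweight : weight mz =
      (∏ j ∈ (Finset.range n).filter (fun j => mz[j]? = some U), heightAt mz (j + 1)) *
      ((∏ j ∈ (Finset.range n).filter (fun j => mz[j]? = some D), heightAt mz j) *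
       (∏ j ∈ (Finset.range n).filter (fun j => mz[j]? = some H),
          (2 * heightAt mz j + 1))) := by
    rw [weight, ← split1, ← split2]
    congr 1
    · refine Finset.prod_congr rfl fun j hj => ?_
      have := (Finset.mem_filter.1 hj).2
      simp [moveWeight, this]
    congr 1
    · refine Finset.prod_congr rfl fun j hj => ?_
      have := (Finset.mem_filter.1 hj).2
      simp [moveWeight, this]
    · refine Finset.prod_congr rfl fun j hj => ?_
      have := (Finset.mem_filter.1 hj).2
      simp [moveWeight, this]
  -- U part
  have hU : (∏ j ∈ (Finset.range n).filter (fun j => mz[j]? = some U), heightAt mz (j + 1))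
      = ∏ k ∈ Finset.Icc 1 h, (k : ℤ) ^ peaksAt mz k := by
    have h1 : ∀ j ∈ (Finset.range n).filter (fun j => mz[j]? = some U),
        1 ≤ heightAt mz (j + 1) ∧ heightAt mz (j + 1) ≤ (h : ℤ) := by
      intro j hj
      obtain ⟨hj1, hj2⟩ := Finset.mem_filter.1 hj
      have hjn := Finset.mem_range.1 hj1
      have hs := heightAt_succ_eq mz j U hj2
      have := hnn j
      have := heightAt_le_maxHeight mz (j + 1) (by omega)
      simp [Move.step] at hs
      omega
    have := prod_eq_pow_card (s := (Finset.range n).filter fun j => mz[j]? = some U)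
      (t := Finset.Icc 1 h) (fun j => heightAt mz (j + 1)) (fun k => (k : ℤ))
      (fun j hj => by have := h1 j hj
                      show (0 : ℤ) ≤ heightAt mz (j + 1); omega)
      (fun j hj => by have := h1 j hj; simp [Finset.mem_Icc]; omega)
    rw [Finset.prod_congr rfl
      (fun j hj => (Int.toNat_of_nonneg (by have := h1 j hj; omega)).symm :
        ∀ j ∈ (Finset.range n).filter (fun j => mz[j]? = some U),
          heightAt mz (j + 1) = ((heightAt mz (j + 1)).toNat : ℤ)), this]
    refine Finset.prod_congr rfl fun k _ => ?_
    rw [Finset.filter_filter]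
    rfl
  -- D part
  have hD : (∏ j ∈ (Finset.range n).filter (fun j => mz[j]? = some D), heightAt mz j)
      = ∏ k ∈ Finset.Icc 1 h, (k : ℤ) ^ downsAt mz k := by
    have h1 : ∀ j ∈ (Finset.range n).filter (fun j => mz[j]? = some D),
        1 ≤ heightAt mz j ∧ heightAt mz j ≤ (h : ℤ) := by
      intro j hj
      obtain ⟨hj1, hj2⟩ := Finset.mem_filter.1 hj
      have hjn := Finset.mem_range.1 hj1
      have hs := heightAt_succ_eq mz j D hj2
      have := hnn (j + 1)
      have := heightAt_le_maxHeight mz j (by omega)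
      simp [Move.step] at hs
      omega
    have := prod_eq_pow_card (s := (Finset.range n).filter fun j => mz[j]? = some D)
      (t := Finset.Icc 1 h) (fun j => heightAt mz j) (fun k => (k : ℤ))
      (fun j hj => by have := h1 j hj
                      show (0 : ℤ) ≤ heightAt mz j; omega)
      (fun j hj => by have := h1 j hj; simp [Finset.mem_Icc]; omega)
    rw [Finset.prod_congr rfl
      (fun j hj => (Int.toNat_of_nonneg (by have := h1 j hj; omega)).symm :
        ∀ j ∈ (Finset.range n).filter (fun j => mz[j]? = some D),
          heightAt mz j = ((heightAt mz j).toNat : ℤ)), this]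
    refine Finset.prod_congr rfl fun k _ => ?_
    rw [Finset.filter_filter]
    rfl
  -- H part
  have hH : (∏ j ∈ (Finset.range n).filter (fun j => mz[j]? = some H),
      (2 * heightAt mz j + 1))
      = ∏ k ∈ Finset.range (h + 1), (2 * (k : ℤ) + 1) ^ flatsAt mz k := by
    have h1 : ∀ j ∈ (Finset.range n).filter (fun j => mz[j]? = some H),
        0 ≤ heightAt mz j ∧ heightAt mz j ≤ (h : ℤ) := by
      intro j hj
      obtain ⟨hj1, _⟩ := Finset.mem_filter.1 hj
      have hjn := Finset.mem_range.1 hj1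
      exact ⟨hnn j, heightAt_le_maxHeight mz j (by omega)⟩
    have := prod_eq_pow_card (s := (Finset.range n).filter fun j => mz[j]? = some H)
      (t := Finset.range (h + 1)) (fun j => heightAt mz j) (fun k => 2 * (k : ℤ) + 1)
      (fun j hj => by have := (h1 j hj).1; show (0 : ℤ) ≤ heightAt mz j; omega)
      (fun j hj => by have := h1 j hj; simp [Finset.mem_range]; omega)
    rw [Finset.prod_congr rfl
      (fun j hj => (by have := h1 j hj; omega :
          2 * heightAt mz j + 1 = 2 * ((heightAt mz j).toNat : ℤ) + 1) :
        ∀ j ∈ (Finset.range n).filter (fun j => mz[j]? = some H),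
          2 * heightAt mz j + 1 = 2 * ((heightAt mz j).toNat : ℤ) + 1), this]
    refine Finset.prod_congr rfl fun k _ => ?_
    rw [Finset.filter_filter]
    rfl
  rw [hweight, hU, hD, hH]
  have hDP : ∀ k ∈ Finset.Icc 1 h, (k : ℤ) ^ downsAt mz k = (k : ℤ) ^ peaksAt mz k := by
    intro k hk
    rw [downsAt_eq_peaksAt mz hmz k (Finset.mem_Icc.1 hk).1]
  rw [Finset.prod_congr rfl hDP]
  have hcomb : (∏ k ∈ Finset.Icc 1 h, (k : ℤ) ^ peaksAt mz k) *
      ((∏ k ∈ Finset.Icc 1 h, (k : ℤ) ^ peaksAt mz k) *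
        ∏ k ∈ Finset.range (h + 1), (2 * (k : ℤ) + 1) ^ flatsAt mz k) =
      (∏ k ∈ Finset.range (h + 1), (2 * (k : ℤ) + 1) ^ flatsAt mz k) *
        ∏ k ∈ Finset.Icc 1 h, (k : ℤ) ^ (2 * peaksAt mz k) := by
    rw [← mul_assoc, ← Finset.prod_mul_distrib, mul_comm]
    congr 1
    refine Finset.prod_congr rfl fun k _ => ?_
    rw [← pow_add, two_mul]
  rw [hcomb]
  unfold permWeight
  push_cast
  ring

end Aux

/-- the weight of a Motzkin path depends only on its building sequence
`a^(mz) = (f_0, p_1, f_1, …, p_h, f_h)`; namely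
`ω(mz) = ∏_{i=0}^h (2i+1)^{f_i} · ∏_{i=1}^h i^{2p_i} = perm(a^(mz))`. -/
theorem weight_eq_permWeight_of_buildSeq (mz : List Move) (hmz : IsMotzkin mz) :
    weight mz = (permWeight (BSeq.mk (maxHeight mz) (flatsAt mz) (peaksAt mz)) : ℤ) ∧
    ∀ a : BSeq, hasBuildSeq mz a → weight mz = (permWeight a : ℤ) := by
  refine ⟨weight_eq_main mz hmz, fun a ha => ?_⟩
  obtain ⟨hh, hf, hp⟩ := ha
  rw [weight_eq_main mz hmz]
  congr 1
  unfold permWeight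
  simp only
  rw [hh]
  congr 1
  · exact Finset.prod_congr rfl fun i _ => by rw [hf i]
  · exact Finset.prod_congr rfl fun i _ => by rw [hp i]
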